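/- Let T be a T_7-free tournament, let z be any vertex of T, and let ℓ ≥ 3. If V_ℓ(z) is 2-in-dominated by V_{ℓ−1}(z), then V_ℓ(z) induces a T_5-free subtournament. -/
import Mathlib


/-- A tournament on vertex set `V`: an irreflexive relation such that for
all distinct `u, v` exactly one of `u→v` and `v→u` holds. -/
def IsTournament {V : Type*} (r : V → V → Prop) : Prop :=
  (∀ v, ¬ r v v) ∧ ∀ u v : V, u ≠ v → (r u v ↔ ¬ r v u)

/-- The restriction of `r` to the vertex set `X` is a transitive relation. -/
def TransOn {V : Type*} (r : V → V → Prop) (X : Finset V) : Prop :=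
  ∀ x ∈ X, ∀ y ∈ X, ∀ z ∈ X, r x y → r y z → r x z

/-- There is a directed walk of length `k` from `v` to `z`. -/
def ReachLen {V : Type*} (r : V → V → Prop) (v z : V) (k : ℕ) : Prop :=
  ∃ f : Fin (k + 1) → V, f 0 = v ∧ f (Fin.last k) = z ∧
    ∀ i : Fin k, r (f i.castSucc) (f i.succ)

/-- The layer `V_ℓ(z)`: vertices whose shortest directed path to `z` has length
exactly `ℓ - 1`. -/
def layer {V : Type*} (r : V → V → Prop) (z : V) (ℓ : ℕ) : Set V :=
  {v | ReachLen r v z (ℓ - 1) ∧ ∀ m < ℓ - 1, ¬ ReachLen r v z m}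

/-- `Z` 2-in-dominates `S`: some subset `Z' ⊆ Z` with `|Z'| ≤ 2` in-dominates `S`,
i.e. every `s ∈ S` has an arc `s → z'` to some `z' ∈ Z'`. -/
def TwoInDominates {V : Type*} (r : V → V → Prop) (Z S : Set V) : Prop :=
  ∃ Z' : Set V, Z' ⊆ Z ∧ Z'.ncard ≤ 2 ∧ ∀ s ∈ S, ∃ z' ∈ Z', r s z'

/-- The set `A` induces a `T_5`-free subtournament: every 5-element subset of `A`
contains a 4-element transitive subset. -/
def T5FreeOn {V : Type*} (r : V → V → Prop) (A : Set V) : Prop :=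
  ∀ X : Finset V, (↑X : Set V) ⊆ A → X.card = 5 →
    ∃ Y ⊆ X, Y.card = 4 ∧ TransOn r Y

/-- The tournament is `T_7`-free: every 7-element vertex subset contains a 5-element
transitive subset. -/
def T7Free {V : Type*} (r : V → V → Prop) : Prop :=
  ∀ Q : Finset V, Q.card = 7 → ∃ X ⊆ Q, X.card = 5 ∧ TransOn r X

lemma reachlen_cons {V : Type*} {r : V → V → Prop} {a b z : V} {k : ℕ}
    (hab : r a b) (h : ReachLen r b z k) : ReachLen r a z (k + 1) := by
  obtain ⟨f, hf0, hfl, hfa⟩ := h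
  refine ⟨Fin.cons a f, by simp, ?_, ?_⟩
  · have : (Fin.last (k+1)) = (Fin.last k).succ := rfl
    rw [this, Fin.cons_succ, hfl]
  · intro i
    induction i using Fin.cases with
    | zero =>
        simpa only [Fin.castSucc_zero, Fin.cons_zero, Fin.cons_succ, hf0] using hab
    | succ j =>
        have e1 : (j.succ).castSucc = (j.castSucc).succ := (Fin.succ_castSucc j).symm
        rw [e1, Fin.cons_succ, Fin.cons_succ]
        exact hfa j

lemma reachlen_tail {V : Type*} {r : V → V → Prop} {a z : V} {k : ℕ}
    (h : ReachLen r a z (k + 1)) : ∃ b, r a b ∧ ReachLen r b z k := by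
  obtain ⟨f, hf0, hfl, hfa⟩ := h
  refine ⟨f 1, ?_, fun i => f i.succ, rfl, ?_, ?_⟩
  · have := hfa 0
    have e1 : ((0 : Fin (k+1)).castSucc) = 0 := rfl
    have e2 : ((0 : Fin (k+1)).succ) = 1 := rfl
    rw [e1, e2, hf0] at this
    exact this
  · show f (Fin.last k).succ = z
    have : (Fin.last k).succ = Fin.last (k+1) := rfl
    rw [this, hfl]
  · intro i
    have e1 : (i.castSucc).succ = (i.succ).castSucc := Fin.succ_castSucc i
    show r (f (i.castSucc).succ) (f (i.succ).succ)
    rw [e1]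
    exact hfa i.succ

/-- in a `T_7`-free tournament, for any vertex `z` and any `ℓ ≥ 3`, if
`V_ℓ(z)` is 2-in-dominated by `V_{ℓ-1}(z)`, then `V_ℓ(z)` induces a `T_5`-free
subtournament. -/
theorem stmt13 {V : Type*} [Fintype V] [DecidableEq V]
    (r : V → V → Prop) (hT : IsTournament r) (h7 : T7Free r) (z : V)
    (ℓ : ℕ) (hℓ : 3 ≤ ℓ)
    (hdom : TwoInDominates r (layer r z (ℓ - 1)) (layer r z ℓ)) :
    T5FreeOn r (layer r z ℓ) := by
  classical
  obtain ⟨n, rfl⟩ : ∃ n, ℓ = n + 3 := ⟨ℓ - 3, by omega⟩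
  obtain ⟨Z', hZsub, hZcard, hZdom⟩ := hdom
  intro X hX hX5
  -- membership facts about the layer n+3
  have hXmem : ∀ x ∈ X, ReachLen r x z (n+2) ∧ ∀ m < n+2, ¬ ReachLen r x z m := by
    intro x hx
    have := hX hx
    simpa [layer] using this
  -- the key lemma: given z' in layer n+2 beaten by at least 3 members of X
  have key : ∀ z', z' ∈ layer r z (n+2) →
      ∀ X1 : Finset V, X1 ⊆ X → (∀ x ∈ X1, r x z') → 3 ≤ X1.card →
      ∃ Y ⊆ X, Y.card = 4 ∧ TransOn r Y := by
    intro z' hz'L X1 hX1sub hX1r hX1card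
    have hz'reach : ReachLen r z' z (n+1) := by
      have := hz'L.1; simpa using this
    have hz'min : ∀ m < n+1, ¬ ReachLen r z' z m := by
      have := hz'L.2; simpa using this
    obtain ⟨w0, hz'w0, hw0reach⟩ := reachlen_tail hz'reach
    -- no x in X has an arc to w0
    have hxnotw0 : ∀ x ∈ X, ¬ r x w0 := fun x hx hr =>
      (hXmem x hx).2 (n+1) (by omega) (reachlen_cons hr hw0reach)
    have hz'X : z' ∉ X := fun h => (hXmem z' h).2 (n+1) (by omega) hz'reach
    have hw0X : w0 ∉ X := fun h => (hXmem w0 h).2 n (by omega) hw0reach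
    have hz'w0ne : z' ≠ w0 := by
      rintro rfl
      exact hz'min n (by omega) hw0reach
    set Q : Finset V := insert z' (insert w0 X) with hQ
    have hQcard : Q.card = 7 := by
      rw [hQ, Finset.card_insert_of_notMem (by simp [hz'w0ne, hz'X]),
        Finset.card_insert_of_notMem hw0X, hX5]
    obtain ⟨Y, hYQ, hY5, hYtrans⟩ := h7 Q hQcard
    have hYmX : Y \ X ⊆ {z', w0} := by
      intro y hy
      rw [Finset.mem_sdiff] at hy
      have := hYQ hy.1
      rw [hQ] at this
      simp only [Finset.mem_insert] at this
      rcases this with rfl | rfl | h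
      · simp
      · simp
      · exact absurd h hy.2
    have hsplit : (Y ∩ X).card + (Y \ X).card = Y.card :=
      Finset.card_inter_add_card_sdiff Y X
    have hYmX2 : (Y \ X).card ≤ 2 := by
      calc (Y \ X).card ≤ ({z', w0} : Finset V).card := Finset.card_le_card hYmX
        _ ≤ 2 := Finset.card_insert_le _ _ |>.trans (by simp)
    -- z' and w0 cannot both be in Y
    have hboth : z' ∉ Y ∨ w0 ∉ Y := by
      by_contra h
      push_neg at h
      obtain ⟨hz'Y, hw0Y⟩ := h
      have hsub : Y ∩ X ⊆ X \ X1 := by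
        intro x hx
        rw [Finset.mem_inter] at hx
        rw [Finset.mem_sdiff]
        refine ⟨hx.2, fun hx1 => ?_⟩
        exact hxnotw0 x hx.2
          (hYtrans x hx.1 z' hz'Y w0 hw0Y (hX1r x hx1) hz'w0)
      have h1 : (X \ X1).card = X.card - X1.card := Finset.card_sdiff_of_subset hX1sub
      have h2 := Finset.card_le_card hsub
      have h3 := Finset.card_le_card hX1sub
      omega
    -- hence at least 4 elements of Y lie in X
    have h4 : 4 ≤ (Y ∩ X).card := by
      have hsingle : ∀ u v : V, u ∉ Y → Y \ X ⊆ {z', w0} → ({z', w0} : Finset V) = {u, v} →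
          (Y \ X).card ≤ 1 := by
        intro u v hu hsub heq
        have : Y \ X ⊆ {v} := by
          intro y hy
          have := hsub hy
          rw [heq] at this
          simp only [Finset.mem_insert, Finset.mem_singleton] at this
          rcases this with rfl | rfl
          · exact absurd (Finset.mem_sdiff.mp hy).1 hu
          · simp
        calc (Y \ X).card ≤ ({v} : Finset V).card := Finset.card_le_card this
          _ = 1 := Finset.card_singleton v
      rcases hboth with h | h
      · have := hsingle z' w0 h hYmX rfl
        omega
      · have := hsingle w0 z' h hYmX (by
          ext a; simp only [Finset.mem_insert, Finset.mem_singleton]; tauto)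
        omega
    obtain ⟨Y', hY'sub, hY'4⟩ := Finset.exists_subset_card_eq h4
    refine ⟨Y', fun y hy => (Finset.mem_inter.mp (hY'sub hy)).2, hY'4, ?_⟩
    intro a ha b hb c hc hab hbc
    exact hYtrans a (Finset.mem_inter.mp (hY'sub ha)).1 b (Finset.mem_inter.mp (hY'sub hb)).1
      c (Finset.mem_inter.mp (hY'sub hc)).1 hab hbc
  -- find z1, z2 covering Z'
  have hXne : X.Nonempty := by rw [← Finset.card_pos, hX5]; norm_num
  obtain ⟨x0, hx0⟩ := hXne
  obtain ⟨z1, hz1Z, -⟩ := hZdom x0 (hX hx0)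
  obtain ⟨z2, hz2Z, hZ'sub⟩ : ∃ z2 ∈ Z', ∀ u ∈ Z', u = z1 ∨ u = z2 := by
    by_cases h : ∃ u ∈ Z', u ≠ z1
    · obtain ⟨z2, hz2, hne⟩ := h
      refine ⟨z2, hz2, fun u hu => ?_⟩
      by_contra hc
      push_neg at hc
      have hsub : ({z1, z2, u} : Set V) ⊆ Z' := by
        intro y hy
        simp only [Set.mem_insert_iff, Set.mem_singleton_iff] at hy
        rcases hy with rfl | rfl | rfl <;> assumption
      have h3 : ({z1, z2, u} : Set V).ncard = 3 :=
        Set.ncard_eq_three.mpr ⟨z1, z2, u, hne.symm, hc.1.symm, hc.2.symm, rfl⟩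
      have hle := Set.ncard_le_ncard hsub (Set.toFinite Z')
      omega
    · push_neg at h
      exact ⟨z1, hz1Z, fun u hu => Or.inl (h u hu)⟩
  have hcov : ∀ x ∈ X, r x z1 ∨ r x z2 := by
    intro x hx
    obtain ⟨u, huZ, hru⟩ := hZdom x (hX hx)
    rcases hZ'sub u huZ with rfl | rfl
    · exact Or.inl hru
    · exact Or.inr hru
  have hz1L : z1 ∈ layer r z (n+2) := by
    have := hZsub hz1Z
    simpa using this
  have hz2L : z2 ∈ layer r z (n+2) := by
    have := hZsub hz2Z
    simpa using this
  -- pigeonhole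
  set X1 := X.filter (fun x => r x z1) with hX1def
  set X2 := X.filter (fun x => r x z2) with hX2def
  have hunion : X ⊆ X1 ∪ X2 := by
    intro x hx
    rw [Finset.mem_union, hX1def, hX2def, Finset.mem_filter, Finset.mem_filter]
    rcases hcov x hx with h | h
    · exact Or.inl ⟨hx, h⟩
    · exact Or.inr ⟨hx, h⟩
  have hpig : 3 ≤ X1.card ∨ 3 ≤ X2.card := by
    have h1 := Finset.card_le_card hunion
    have h2 := Finset.card_union_le X1 X2
    omega
  rcases hpig with h | h
  · exact key z1 hz1L X1 (Finset.filter_subset _ _)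
      (fun x hx => (Finset.mem_filter.mp hx).2) h
  · exact key z2 hz2L X2 (Finset.filter_subset _ _)
      (fun x hx => (Finset.mem_filter.mp hx).2) h
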